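/- For every g ∈ L²((0,1),ℂ) with μ₀(g) = 0 and every ε > 0, there exists f ∈ L²((0,1),ℂ) with μ₀(f) = μ₁(f) = 0 such that ‖P(g−f)‖_{L²(0,1)} < ε. (Density of the doubly-constrained space V = {f ∈ L² : μ₀(f) = μ₁(f) = 0} in the mean-zero part of H⁻¹(T).) -/

import Mathlib

open MeasureTheory intervalIntegral Set

/-- `𝓘g(x) = ∫₀ˣ g(y) dy` -/
noncomputable def Iprim (g : ℝ → ℂ) (x : ℝ) : ℂ := ∫ y in (0:ℝ)..x, g y

/-- `Pg(x) = 𝓘g(x) − ∫₀¹ 𝓘g(z) dz` -/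
noncomputable def Pfun (g : ℝ → ℂ) (x : ℝ) : ℂ := Iprim g x - ∫ z in (0:ℝ)..1, Iprim g z

/-- `μ₀(g) = ∫₀¹ g(x) dx` -/
noncomputable def mu0 (g : ℝ → ℂ) : ℂ := ∫ x in (0:ℝ)..1, g x

/-- `μ₁(g) = ∫₀¹ (1−x) g(x) dx` -/
noncomputable def mu1 (g : ℝ → ℂ) : ℂ := ∫ x in (0:ℝ)..1, ((1 - x : ℝ) : ℂ) * g x

noncomputable def psiN (n : ℕ) (x : ℝ) : ℝ := 1 - (1-x)^n - x^n
noncomputable def dN (n : ℕ) (x : ℝ) : ℝ := n*(1-x)^(n-1) - n*x^(n-1)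

lemma cont_dN (n : ℕ) : Continuous (dN n) := by unfold dN; fun_prop
lemma cont_psiN (n : ℕ) : Continuous (psiN n) := by unfold psiN; fun_prop

lemma int_one_sub_pow (n : ℕ) (x : ℝ) : ∫ y in (0:ℝ)..x, (1-y)^n = (1 - (1-x)^(n+1))/(n+1) := by
  rw [show (fun y : ℝ => (1-y)^n) = fun y => (fun z : ℝ => z^n) (1 - y) from rfl,
    intervalIntegral.integral_comp_sub_left (fun z : ℝ => z^n) 1, integral_pow]
  ring

lemma int_dN (n : ℕ) (hn : 1 ≤ n) (x : ℝ) : ∫ y in (0:ℝ)..x, dN n y = psiN n x := by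
  unfold dN psiN
  rw [intervalIntegral.integral_sub (by apply Continuous.intervalIntegrable; fun_prop)
    (by apply Continuous.intervalIntegrable; fun_prop),
    intervalIntegral.integral_const_mul, intervalIntegral.integral_const_mul,
    int_one_sub_pow, integral_pow, Nat.sub_add_cancel hn]
  have h : (0:ℝ) < n := by exact_mod_cast hn
  field_simp
  rw [zero_pow (by omega : n ≠ 0), Nat.cast_sub hn]
  push_cast
  ring

lemma int_psiN (n : ℕ) (hn : 1 ≤ n) : ∫ x in (0:ℝ)..1, psiN n x = ((n:ℝ)-1)/((n:ℝ)+1) := by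
  unfold psiN
  rw [intervalIntegral.integral_sub (by apply Continuous.intervalIntegrable; fun_prop)
    (by apply Continuous.intervalIntegrable; fun_prop),
    intervalIntegral.integral_sub (by apply Continuous.intervalIntegrable; fun_prop)
    (by apply Continuous.intervalIntegrable; fun_prop),
    int_one_sub_pow, integral_pow, intervalIntegral.integral_const]
  have h : (0:ℝ) < n + 1 := by positivity
  field_simp
  simp only [sub_self, zero_pow (show n + 1 ≠ 0 by omega), one_pow, smul_eq_mul]
  ring

lemma int_mu1_dN (n : ℕ) (hn : 1 ≤ n) :
    ∫ x in (0:ℝ)..1, (1-x) * dN n x = ((n:ℝ)-1)/((n:ℝ)+1) := by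
  have key : ∀ x : ℝ, (1-x) * dN n x = (n * (1-x)^n) - (n * (x^(n-1) - x^n)) := by
    intro x
    unfold dN
    have h1 : (1-x)^n = (1-x)^(n-1) * (1-x) := by
      conv_lhs => rw [← Nat.sub_add_cancel hn]
      rw [pow_succ]
    rw [h1]
    have h2 : x^n = x^(n-1) * x := by
      conv_lhs => rw [← Nat.sub_add_cancel hn]
      rw [pow_succ]
    rw [h2]
    ring
  simp_rw [key]
  rw [intervalIntegral.integral_sub (by apply Continuous.intervalIntegrable; fun_prop)
    (by apply Continuous.intervalIntegrable; fun_prop),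
    intervalIntegral.integral_const_mul, intervalIntegral.integral_const_mul,
    intervalIntegral.integral_sub (by apply Continuous.intervalIntegrable; fun_prop)
    (by apply Continuous.intervalIntegrable; fun_prop),
    int_one_sub_pow, integral_pow, integral_pow, Nat.sub_add_cancel hn]
  have h : (0:ℝ) < n := by exact_mod_cast hn
  field_simp
  simp only [zero_pow (show n ≠ 0 by omega), Nat.cast_sub hn, Nat.cast_one]
  ring

lemma int_sq_psiN (n : ℕ) (hn : 1 ≤ n) :
    ∫ x in (0:ℝ)..1, (psiN n x - ((n:ℝ)-1)/((n:ℝ)+1))^2 ≤ 18/((n:ℝ)+1) := by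
  have hnp : (0:ℝ) < n + 1 := by positivity
  have hbound : ∀ x ∈ Icc (0:ℝ) 1,
      (psiN n x - ((n:ℝ)-1)/((n:ℝ)+1))^2 ≤ 3*((2/((n:ℝ)+1))^2 + (1-x)^(2*n) + x^(2*n)) := by
    intro x _
    have hrw : psiN n x - ((n:ℝ)-1)/((n:ℝ)+1) = 2/((n:ℝ)+1) - (1-x)^n - x^n := by
      unfold psiN; field_simp; ring
    rw [hrw, two_mul, pow_add, pow_add]
    nlinarith [sq_nonneg (2/((n:ℝ)+1) - (1-x)^n - x^n), sq_nonneg (2/((n:ℝ)+1) + (1-x)^n),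
      sq_nonneg (2/((n:ℝ)+1) + x^n), sq_nonneg ((1-x)^n + x^n),
      sq_nonneg ((1-x)^n - x^n), sq_nonneg (2/((n:ℝ)+1) - (1-x)^n), sq_nonneg (2/((n:ℝ)+1) - x^n)]
  have h1 : ∫ x in (0:ℝ)..1, (psiN n x - ((n:ℝ)-1)/((n:ℝ)+1))^2
      ≤ ∫ x in (0:ℝ)..1, 3*((2/((n:ℝ)+1))^2 + (1-x)^(2*n) + x^(2*n)) := by
    apply intervalIntegral.integral_mono_on (by norm_num)
      (by apply Continuous.intervalIntegrable; have := cont_psiN n; fun_prop)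
      (by apply Continuous.intervalIntegrable; fun_prop) hbound
  have h2 : ∫ x in (0:ℝ)..1, 3*((2/((n:ℝ)+1))^2 + (1-x)^(2*n) + x^(2*n))
      = 3*((2/((n:ℝ)+1))^2 + 1/(2*(n:ℝ)+1) + 1/(2*(n:ℝ)+1)) := by
    rw [intervalIntegral.integral_const_mul]
    congr 1
    rw [intervalIntegral.integral_add (by apply Continuous.intervalIntegrable; fun_prop)
        (by apply Continuous.intervalIntegrable; fun_prop),
      intervalIntegral.integral_add (by apply Continuous.intervalIntegrable; fun_prop)
        (by apply Continuous.intervalIntegrable; fun_prop),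
      int_one_sub_pow, integral_pow, intervalIntegral.integral_const]
    have h2n : (0:ℝ) < 2*n+1 := by positivity
    push_cast
    field_simp
    simp only [sub_self, zero_pow (show 2 * n + 1 ≠ 0 by omega), one_pow, smul_eq_mul]
    field_simp
    ring
  have h3 : 3*((2/((n:ℝ)+1))^2 + 1/(2*(n:ℝ)+1) + 1/(2*(n:ℝ)+1)) ≤ 18/((n:ℝ)+1) := by
    have e1 : (2/((n:ℝ)+1))^2 ≤ 4/((n:ℝ)+1) := by
      rw [div_pow]
      rw [div_le_div_iff₀ (by positivity) hnp]
      nlinarith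
    have e2 : 1/(2*(n:ℝ)+1) ≤ 1/((n:ℝ)+1) := by
      apply one_div_le_one_div_of_le hnp
      have : (1:ℝ) ≤ n := by exact_mod_cast hn
      linarith
    have e3 : 18/((n:ℝ)+1) = 3*(4/((n:ℝ)+1) + 1/((n:ℝ)+1) + 1/((n:ℝ)+1)) := by ring
    linarith
  calc _ ≤ _ := h1
    _ = _ := h2
    _ ≤ _ := h3

lemma Iprim_smul_dN (n : ℕ) (hn : 1 ≤ n) (s : ℂ) (x : ℝ) :
    Iprim (fun y => s * ((dN n y : ℝ) : ℂ)) x = s * ((psiN n x : ℝ) : ℂ) := by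
  unfold Iprim
  rw [intervalIntegral.integral_const_mul, intervalIntegral.integral_ofReal, int_dN n hn]

lemma Pfun_smul_dN (n : ℕ) (hn : 1 ≤ n) (s : ℂ) (x : ℝ) :
    Pfun (fun y => s * ((dN n y : ℝ) : ℂ)) x
      = s * (((psiN n x - ((n:ℝ)-1)/((n:ℝ)+1)) : ℝ) : ℂ) := by
  unfold Pfun
  rw [Iprim_smul_dN n hn]
  have : (∫ z in (0:ℝ)..1, Iprim (fun y => s * ((dN n y : ℝ) : ℂ)) z)
      = s * ((((n:ℝ)-1)/((n:ℝ)+1) : ℝ) : ℂ) := by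
    simp_rw [Iprim_smul_dN n hn s]
    rw [intervalIntegral.integral_const_mul, intervalIntegral.integral_ofReal, int_psiN n hn]
  rw [this]
  push_cast
  ring

theorem stmt7 (g : ℝ → ℂ)
    (hg : MemLp g 2 (volume.restrict (Set.Ioo (0:ℝ) 1)))
    (hg0 : mu0 g = 0) :
    ∀ ε : ℝ, 0 < ε →
      ∃ f : ℝ → ℂ, MemLp f 2 (volume.restrict (Set.Ioo (0:ℝ) 1)) ∧
        mu0 f = 0 ∧ mu1 f = 0 ∧
        ((∫ x in (0:ℝ)..1, ‖Pfun (fun y => g y - f y) x‖ ^ 2) ^ ((1:ℝ)/2)) < ε := by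
  intro ε hε
  set m : ℂ := mu1 g with hm
  -- choose n
  obtain ⟨n, hngt⟩ := exists_nat_gt (max 2 (162*‖m‖^2/ε^2))
  have hn2 : 2 ≤ n := by
    have : (2:ℝ) < n := lt_of_le_of_lt (le_max_left _ _) hngt
    exact_mod_cast this.le
  have hn1 : 1 ≤ n := le_trans (by norm_num) hn2
  have hnR : (2:ℝ) ≤ (n:ℝ) := by exact_mod_cast hn2
  have hnp : (0:ℝ) < (n:ℝ) + 1 := by positivity
  have hnm : (0:ℝ) < (n:ℝ) - 1 := by linarith
  have hεn : 162*‖m‖^2/((n:ℝ)+1) < ε^2 := by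
    rw [div_lt_iff₀ hnp]
    have h1 : 162*‖m‖^2/ε^2 < (n:ℝ) := lt_of_le_of_lt (le_max_right _ _) hngt
    rw [div_lt_iff₀ (by positivity)] at h1
    nlinarith
  set A : ℝ := ((n:ℝ)-1)/((n:ℝ)+1) with hA
  have hApos : 0 < A := div_pos hnm hnp
  set s : ℂ := m * ((A⁻¹ : ℝ) : ℂ) with hs
  have hsn : ‖s‖ ≤ 3 * ‖m‖ := by
    rw [hs, norm_mul, Complex.norm_real, Real.norm_eq_abs, abs_inv, abs_of_pos hApos]
    have hA3 : (3:ℝ)⁻¹ ≤ A := by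
      rw [hA, le_div_iff₀ hnp]
      linarith
    have : A⁻¹ ≤ 3 := by
      rw [← inv_inv (3:ℝ)]
      exact inv_anti₀ (by norm_num) hA3
    nlinarith [norm_nonneg m]
  -- the perturbation and f
  set f : ℝ → ℂ := fun y => g y - s * ((dN n y : ℝ) : ℂ) with hf
  -- integrability facts
  have hgint : Integrable g (volume.restrict (Set.Ioo (0:ℝ) 1)) := hg.integrable (by norm_num)
  have hgiv : IntervalIntegrable g volume 0 1 := by
    rw [intervalIntegrable_iff_integrableOn_Ioc_of_le (by norm_num : (0:ℝ) ≤ 1)]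
    exact IntegrableOn.congr_set_ae hgint Ioo_ae_eq_Ioc.symm
  have hdiv : IntervalIntegrable (fun y => s * ((dN n y : ℝ) : ℂ)) volume 0 1 := by
    apply Continuous.intervalIntegrable
    have := cont_dN n
    fun_prop
  -- MemLp of f
  have hdmem : MemLp (fun y => s * ((dN n y : ℝ) : ℂ)) 2 (volume.restrict (Set.Ioo (0:ℝ) 1)) := by
    apply MemLp.of_bound (C := ‖s‖ * (2*(n:ℝ)))
    · exact Continuous.aestronglyMeasurable (by have := cont_dN n; fun_prop)
    · rw [ae_restrict_iff' measurableSet_Ioo]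
      filter_upwards with x hx
      rw [norm_mul, Complex.norm_real, Real.norm_eq_abs]
      apply mul_le_mul_of_nonneg_left _ (norm_nonneg s)
      unfold dN
      obtain ⟨hx0, hx1⟩ := hx
      have b1 : |(1-x)^(n-1)| ≤ 1 := by
        rw [abs_pow]
        apply pow_le_one₀ (abs_nonneg _)
        rw [abs_le]; constructor <;> linarith
      have b2 : |x^(n-1)| ≤ 1 := by
        rw [abs_pow]
        apply pow_le_one₀ (abs_nonneg _)
        rw [abs_le]; constructor <;> linarith
      calc |(n:ℝ)*(1-x)^(n-1) - (n:ℝ)*x^(n-1)|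
          ≤ |(n:ℝ)*(1-x)^(n-1)| + |(n:ℝ)*x^(n-1)| := abs_sub _ _
        _ = (n:ℝ)*|(1-x)^(n-1)| + (n:ℝ)*|x^(n-1)| := by
            rw [abs_mul, abs_mul, Nat.abs_cast]
        _ ≤ (n:ℝ)*1 + (n:ℝ)*1 := by
            have hn0 : (0:ℝ) ≤ n := Nat.cast_nonneg n
            gcongr
        _ = 2*(n:ℝ) := by ring
  have hfmem : MemLp f 2 (volume.restrict (Set.Ioo (0:ℝ) 1)) := hg.sub hdmem
  refine ⟨f, hfmem, ?_, ?_, ?_⟩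
  · -- mu0 f = 0
    unfold mu0
    rw [show (fun x => f x) = fun x => g x - s * ((dN n x : ℝ) : ℂ) from rfl]
    rw [intervalIntegral.integral_sub hgiv hdiv, intervalIntegral.integral_const_mul,
      intervalIntegral.integral_ofReal, int_dN n hn1]
    have : psiN n 1 = 0 := by
      unfold psiN
      rw [sub_self, zero_pow (by omega), one_pow]
      ring
    rw [this]
    have hg0' : (∫ x in (0:ℝ)..1, g x) = 0 := hg0
    rw [hg0']
    simp
  · -- mu1 f = 0
    unfold mu1
    have hsplit : ∀ x : ℝ, ((1 - x : ℝ) : ℂ) * f x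
        = ((1 - x : ℝ) : ℂ) * g x - s * ((((1-x) * dN n x) : ℝ) : ℂ) := by
      intro x
      rw [hf]
      push_cast
      ring
    simp_rw [hsplit]
    have i1 : IntervalIntegrable (fun x => ((1 - x : ℝ) : ℂ) * g x) volume 0 1 := by
      rw [intervalIntegrable_iff_integrableOn_Ioc_of_le (by norm_num : (0:ℝ) ≤ 1)]
      apply IntegrableOn.congr_set_ae _ Ioo_ae_eq_Ioc.symm
      apply Integrable.bdd_mul (c := 1) hgint
      · exact Continuous.aestronglyMeasurable (by fun_prop)
      · rw [ae_restrict_iff' measurableSet_Ioo]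
        filter_upwards with x hx
        rw [Complex.norm_real, Real.norm_eq_abs, abs_le]
        obtain ⟨hx0, hx1⟩ := hx
        constructor <;> linarith
    have i2 : IntervalIntegrable (fun x => s * ((((1-x) * dN n x) : ℝ) : ℂ)) volume 0 1 := by
      apply Continuous.intervalIntegrable
      have := cont_dN n
      fun_prop
    rw [intervalIntegral.integral_sub i1 i2, intervalIntegral.integral_const_mul,
      intervalIntegral.integral_ofReal, int_mu1_dN n hn1]
    have hmu1g : (∫ x in (0:ℝ)..1, ((1 - x : ℝ) : ℂ) * g x) = m := rfl
    rw [hmu1g, hs]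
    rw [show ((((n:ℝ)-1)/((n:ℝ)+1) : ℝ) : ℂ) = ((A : ℝ) : ℂ) from by rw [hA]]
    have hAne : ((A : ℝ) : ℂ) ≠ 0 := by
      simp only [ne_eq, Complex.ofReal_eq_zero]
      exact ne_of_gt hApos
    field_simp
    rw [← Complex.ofReal_mul, one_div_mul_cancel hApos.ne', Complex.ofReal_one]
    ring
  · -- the norm bound
    have hdiff : (fun y => g y - f y) = fun y => s * ((dN n y : ℝ) : ℂ) := by
      funext y
      rw [hf]
      ring
    rw [hdiff]
    have hPf : ∀ x : ℝ, ‖Pfun (fun y => s * ((dN n y : ℝ) : ℂ)) x‖ ^ 2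
        = ‖s‖^2 * (psiN n x - A)^2 := by
      intro x
      rw [Pfun_smul_dN n hn1, norm_mul, Complex.norm_real, Real.norm_eq_abs, mul_pow, sq_abs, hA]
    simp_rw [hPf]
    rw [intervalIntegral.integral_const_mul]
    have hJ : ∫ x in (0:ℝ)..1, (psiN n x - A)^2 ≤ 18/((n:ℝ)+1) := by
      rw [hA]; exact int_sq_psiN n hn1
    have hJ0 : 0 ≤ ∫ x in (0:ℝ)..1, (psiN n x - A)^2 := by
      apply intervalIntegral.integral_nonneg (by norm_num)
      intro x _
      positivity
    have hI0 : 0 ≤ ‖s‖^2 * ∫ x in (0:ℝ)..1, (psiN n x - A)^2 := by positivity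
    have hIlt : ‖s‖^2 * (∫ x in (0:ℝ)..1, (psiN n x - A)^2) < ε^2 := by
      calc ‖s‖^2 * (∫ x in (0:ℝ)..1, (psiN n x - A)^2)
          ≤ (3*‖m‖)^2 * (18/((n:ℝ)+1)) := by
            apply mul_le_mul _ hJ hJ0 (by positivity)
            have := norm_nonneg s
            nlinarith
        _ = 162*‖m‖^2/((n:ℝ)+1) := by ring
        _ < ε^2 := hεn
    calc (‖s‖^2 * ∫ x in (0:ℝ)..1, (psiN n x - A)^2) ^ ((1:ℝ)/2)
        < (ε^2) ^ ((1:ℝ)/2) := Real.rpow_lt_rpow hI0 hIlt (by norm_num)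
      _ = ε := by
          rw [← Real.rpow_natCast ε 2, ← Real.rpow_mul hε.le]
          norm_num
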